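/- Let T be a cyclic analytic left invertible bounded linear operator on a nonzero complex Hilbert space H, let f ∈ H and let g ∈ ker T*. Then σ_l(T) ⊆ σ_l(T + f⊗g), σ_l(T + f⊗g) \ {⟨f,g⟩} = σ_l(T) \ {⟨f,g⟩}, and the spectral radius satisfies r(T + f⊗g) = max{r(T), |⟨f,g⟩|}. -/

import Mathlib

open scoped InnerProductSpace NNReal ENNReal Topology
open Filter

section Aux

/-- bounded below implies left invertible, in a Hilbert space -/
lemma exists_left_inverse_of_bound {H : Type*} [NormedAddCommGroup H] [InnerProductSpace ℂ H]
    [CompleteSpace H] (S : H →L[ℂ] H) (K : ℝ) (h : ∀ x, ‖x‖ ≤ K * ‖S x‖) :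
    ∃ L : H →L[ℂ] H, L ∘L S = 1 := by
  set K' : ℝ≥0 := ⟨max K 0, le_max_right _ _⟩ with hK'
  have h' : ∀ x, ‖x‖ ≤ (K' : ℝ) * ‖S x‖ := fun x =>
    (h x).trans (mul_le_mul_of_nonneg_right (le_max_left _ _) (norm_nonneg _))
  have hanti : AntilipschitzWith K' S := ContinuousLinearMap.antilipschitz_of_bound S h'
  have hinj : Function.Injective S := hanti.injective
  set R : Submodule ℂ H := LinearMap.range S.toLinearMap with hR
  have hclR : IsClosed (R : Set H) := by
    have : (R : Set H) = Set.range S := LinearMap.coe_range _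
    rw [this]
    exact hanti.isClosed_range S.uniformContinuous
  haveI : CompleteSpace R := hclR.completeSpace_coe
  set e : H ≃ₗ[ℂ] R := LinearEquiv.ofInjective S.toLinearMap hinj with he
  have hcoe : ∀ x : H, ((e x : R) : H) = S x := fun x => rfl
  have hbound : ∀ y : R, ‖e.symm.toLinearMap y‖ ≤ (K' : ℝ) * ‖y‖ := by
    intro y
    have h1 : ((e (e.symm y) : R) : H) = S (e.symm y) := hcoe _
    rw [e.apply_symm_apply] at h1
    have := h' (e.symm y)
    rw [← h1] at this
    simpa using this
  set L0 : R →L[ℂ] H := LinearMap.mkContinuous e.symm.toLinearMap (K' : ℝ) hbound with hL0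
  refine ⟨L0 ∘L (R.orthogonalProjectionOnto), ?_⟩
  ext x
  have hmem : S x ∈ R := LinearMap.mem_range_self _ x
  have hproj : R.orthogonalProjectionOnto (S x) = ⟨S x, hmem⟩ := by
    exact Submodule.orthogonalProjectionOnto_mem_subspace_eq_self (⟨S x, hmem⟩ : R)
  simp only [ContinuousLinearMap.comp_apply, ContinuousLinearMap.one_apply]
  rw [hproj]
  have : (⟨S x, hmem⟩ : R) = e x := by
    apply Subtype.ext
    exact (hcoe x).symm
  rw [this]
  exact e.symm_apply_apply x

variable {A : Type*} [NormedRing A] [NormedAlgebra ℂ A] [CompleteSpace A]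

lemma sr_le_aux (a : A) (ρ : ℝ≥0) (C : ℝ) (hC : 0 < C)
    (h : ∀ n : ℕ, ‖a ^ n‖ ≤ C * (n + 1) * (ρ : ℝ) ^ n) : spectralRadius ℂ a ≤ ρ := by
  refine ENNReal.le_of_forall_pos_le_add fun ε hε _ => ?_
  rw [← ENNReal.coe_add]
  set σ : ℝ≥0 := ρ + ε with hσ
  have hσpos : (0 : ℝ) < σ := by positivity
  set r : ℝ := (ρ : ℝ) / (σ : ℝ) with hr
  have hrnn : 0 ≤ r := by positivity
  have hrlt : r < 1 := by
    rw [hr, div_lt_one hσpos]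
    exact_mod_cast lt_add_of_pos_right _ hε
  have hrnorm : ‖r‖ < 1 := by rwa [Real.norm_of_nonneg hrnn]
  have hsum1 : Summable (fun n : ℕ => (n : ℝ) ^ 1 * r ^ n) :=
    summable_pow_mul_geometric_of_norm_lt_one 1 hrnorm
  have hsum2 : Summable (fun n : ℕ => r ^ n) := summable_geometric_of_norm_lt_one hrnorm
  have htend : Tendsto (fun n : ℕ => C * ((n : ℝ) ^ 1 * r ^ n + r ^ n)) atTop (𝓝 (C * (0 + 0))) :=
    (hsum1.tendsto_atTop_zero.add hsum2.tendsto_atTop_zero).const_mul C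
  rw [add_zero, mul_zero] at htend
  have hev : ∀ᶠ n : ℕ in atTop, C * ((n : ℝ) ^ 1 * r ^ n + r ^ n) ≤ 1 :=
    htend.eventually_le_const one_pos
  have key := spectrum.pow_nnnorm_pow_one_div_tendsto_nhds_spectralRadius a
  refine le_of_tendsto key ?_
  filter_upwards [hev, eventually_ge_atTop 1] with n hn hn1
  have hρσ : (ρ : ℝ) = r * (σ : ℝ) := by
    rw [hr, div_mul_cancel₀]; exact ne_of_gt hσpos
  have hnorm : ‖a ^ n‖ ≤ (σ : ℝ) ^ n := by
    calc ‖a ^ n‖ ≤ C * (n + 1) * (ρ : ℝ) ^ n := h n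
      _ = C * ((n : ℝ) ^ 1 * r ^ n + r ^ n) * (σ : ℝ) ^ n := by
          rw [hρσ, mul_pow]; ring
      _ ≤ 1 * (σ : ℝ) ^ n := by
          apply mul_le_mul_of_nonneg_right hn (by positivity)
      _ = (σ : ℝ) ^ n := one_mul _
  have hnn : ‖a ^ n‖₊ ≤ σ ^ n := by
    rw [← NNReal.coe_le_coe]
    simpa using hnorm
  calc (‖a ^ n‖₊ : ℝ≥0∞) ^ (1 / n : ℝ) ≤ ((σ ^ n : ℝ≥0) : ℝ≥0∞) ^ (1 / n : ℝ) := by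
        exact ENNReal.rpow_le_rpow (by exact_mod_cast hnn) (by positivity)
    _ = (σ : ℝ≥0∞) := by
        rw [ENNReal.coe_pow, ← ENNReal.rpow_natCast (σ : ℝ≥0∞) n, ← ENNReal.rpow_mul]
        rw [mul_one_div_cancel (by exact_mod_cast Nat.one_le_iff_ne_zero.mp hn1 : (n : ℝ) ≠ 0)]
        exact ENNReal.rpow_one _

lemma pow_norm_le_of_sr_lt (a : A) (ρ : ℝ≥0) (h : spectralRadius ℂ a < ρ) :
    ∃ C : ℝ, 1 ≤ C ∧ ∀ n : ℕ, ‖a ^ n‖ ≤ C * (ρ : ℝ) ^ n := by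
  have hρpos : (0 : ℝ) < ρ := by
    by_contra hc
    push_neg at hc
    have : ρ = 0 := le_antisymm (by exact_mod_cast hc) (by positivity)
    rw [this] at h
    simp at h
  have key := spectrum.pow_nnnorm_pow_one_div_tendsto_nhds_spectralRadius a
  have hev : ∀ᶠ n : ℕ in atTop, (‖a ^ n‖₊ : ℝ≥0∞) ^ (1 / n : ℝ) < (ρ : ℝ≥0∞) :=
    key.eventually_lt_const h
  obtain ⟨N, hN⟩ := hev.exists_forall_of_atTop
  set M := max N 1 with hM
  have hbig : ∀ n, M ≤ n → ‖a ^ n‖ ≤ (ρ : ℝ) ^ n := by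
    intro n hn
    have hn1 : 1 ≤ n := le_trans (le_max_right _ _) hn
    have hnN : N ≤ n := le_trans (le_max_left _ _) hn
    have h1 := hN n hnN
    have hne : (n : ℝ) ≠ 0 := by exact_mod_cast Nat.one_le_iff_ne_zero.mp hn1
    have h2 : ((‖a ^ n‖₊ : ℝ≥0∞) ^ (1 / n : ℝ)) ^ (n : ℕ) ≤ (ρ : ℝ≥0∞) ^ (n : ℕ) :=
      pow_le_pow_left' h1.le n
    rw [← ENNReal.rpow_natCast ((‖a ^ n‖₊ : ℝ≥0∞) ^ (1 / n : ℝ)), ← ENNReal.rpow_mul,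
      one_div_mul_cancel hne, ENNReal.rpow_one] at h2
    rw [← ENNReal.coe_pow, ENNReal.coe_le_coe] at h2
    have := NNReal.coe_le_coe.mpr h2
    simpa using this
  set C : ℝ := 1 + ∑ k ∈ Finset.range M, ‖a ^ k‖ / (ρ : ℝ) ^ k with hC
  have hterm : ∀ k, 0 ≤ ‖a ^ k‖ / (ρ : ℝ) ^ k := fun k => by positivity
  have hC1 : 1 ≤ C := by
    rw [hC]
    have : (0:ℝ) ≤ ∑ k ∈ Finset.range M, ‖a ^ k‖ / (ρ : ℝ) ^ k :=
      Finset.sum_nonneg fun k _ => hterm k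
    linarith
  refine ⟨C, hC1, fun n => ?_⟩
  by_cases hcase : n < M
  · have hmem : n ∈ Finset.range M := Finset.mem_range.mpr hcase
    have hle : ‖a ^ n‖ / (ρ : ℝ) ^ n ≤ ∑ k ∈ Finset.range M, ‖a ^ k‖ / (ρ : ℝ) ^ k :=
      Finset.single_le_sum (fun k _ => hterm k) hmem
    have : ‖a ^ n‖ / (ρ : ℝ) ^ n ≤ C := by rw [hC]; linarith
    calc ‖a ^ n‖ = (‖a ^ n‖ / (ρ : ℝ) ^ n) * (ρ : ℝ) ^ n := by
          field_simp
      _ ≤ C * (ρ : ℝ) ^ n := mul_le_mul_of_nonneg_right this (by positivity)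
  · push_neg at hcase
    calc ‖a ^ n‖ ≤ (ρ : ℝ) ^ n := hbig n hcase
      _ = 1 * (ρ : ℝ) ^ n := (one_mul _).symm
      _ ≤ C * (ρ : ℝ) ^ n := mul_le_mul_of_nonneg_right hC1 (by positivity)

end Aux

lemma mem_spectrum_of_left_eig {H : Type*} [NormedAddCommGroup H] [InnerProductSpace ℂ H]
    [CompleteSpace H] (A : H →L[ℂ] H) (g : H) (α : ℂ) (hg0 : g ≠ 0)
    (hgA : ∀ x, ⟪g, A x⟫_ℂ = α * ⟪g, x⟫_ℂ) : α ∈ spectrum ℂ A := by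
  rw [spectrum.mem_iff]
  intro hu
  set B : H →L[ℂ] H := algebraMap ℂ (H →L[ℂ] H) α - A with hB
  have hBadj : ContinuousLinearMap.adjoint B g = 0 := by
    apply ext_inner_right ℂ
    intro v
    rw [ContinuousLinearMap.adjoint_inner_left, inner_zero_left]
    have hBv : B v = α • v - A v := by
      rw [hB]
      simp [Algebra.algebraMap_eq_smul_one]
    rw [hBv, inner_sub_right, inner_smul_right, hgA v, sub_self]
  obtain ⟨u, hu'⟩ := hu
  have h1 : star ((↑u : H →L[ℂ] H) * ↑u⁻¹) = 1 := by rw [u.mul_inv, star_one]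
  rw [star_mul] at h1
  have hstarB : star (↑u : H →L[ℂ] H) g = 0 := by
    rw [ContinuousLinearMap.star_eq_adjoint, hu', hBadj]
  have : g = 0 := by
    calc g = ((star (↑u⁻¹ : H →L[ℂ] H) * star (↑u : H →L[ℂ] H))) g := by
          rw [h1]; rfl
      _ = (star (↑u⁻¹ : H →L[ℂ] H)) ((star (↑u : H →L[ℂ] H)) g) := rfl
      _ = 0 := by rw [hstarB, map_zero]
  exact hg0 this

section PowLemmas
variable {H : Type*} [NormedAddCommGroup H] [InnerProductSpace ℂ H] [CompleteSpace H]
    [Nontrivial H]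

lemma sr_left_le (T F : H →L[ℂ] H) (hFT : F * T = 0) (ρ : ℝ≥0)
    (hρ : spectralRadius ℂ (T + F) < ρ) : spectralRadius ℂ T ≤ ρ := by
  set A : H →L[ℂ] H := T + F with hA
  have hρpos : (0:ℝ) < ρ := by
    by_contra hcon
    push_neg at hcon
    have h0 : ρ = 0 := le_antisymm (by exact_mod_cast hcon) (by positivity)
    rw [h0] at hρ
    simp only [ENNReal.coe_zero] at hρ
    exact ENNReal.not_lt_zero hρ
  obtain ⟨C, hC1, hCb⟩ := pow_norm_le_of_sr_lt A ρ hρ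
  have hTAF : T = A - F := by rw [hA, add_sub_cancel_right]
  have hTA : ∀ n : ℕ, T ^ (n + 1) = A ^ (n + 1) - A ^ n * F := by
    intro n
    induction n with
    | zero => simpa [pow_one, pow_zero, one_mul] using hTAF
    | succ n ih =>
      calc T ^ (n + 2) = (A ^ (n + 1) - A ^ n * F) * T := by rw [pow_succ, ih]
        _ = A ^ (n + 1) * T := by rw [sub_mul, mul_assoc, hFT, mul_zero, sub_zero]
        _ = A ^ (n + 2) - A ^ (n + 1) * F := by rw [hTAF, mul_sub, ← pow_succ]
  set C' : ℝ := C * (1 + ‖F‖ / (ρ : ℝ)) with hC'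
  have hC'pos : 0 < C' := by positivity
  apply sr_le_aux T ρ C' hC'pos
  intro n
  match n with
  | 0 =>
    have h0 : (1:ℝ) ≤ C' := by
      have hq : (0:ℝ) ≤ ‖F‖ / (ρ:ℝ) := by positivity
      rw [hC']; nlinarith
    simp only [pow_zero, norm_one, Nat.cast_zero]
    nlinarith
  | (n + 1) =>
    have h1 : ‖T ^ (n + 1)‖ ≤ ‖A ^ (n + 1)‖ + ‖A ^ n‖ * ‖F‖ := by
      rw [hTA n]
      exact (norm_sub_le _ _).trans (by gcongr; exact norm_mul_le _ _)
    have h2 := hCb (n + 1)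
    have h3 := hCb n
    have hFn : (0:ℝ) ≤ ‖F‖ := norm_nonneg _
    have hpow : (0:ℝ) ≤ (ρ:ℝ) ^ n := by positivity
    calc ‖T ^ (n + 1)‖ ≤ C * (ρ:ℝ) ^ (n + 1) + C * (ρ:ℝ) ^ n * ‖F‖ := by
          nlinarith [mul_le_mul_of_nonneg_right h3 hFn]
      _ ≤ C' * (↑(n + 1) + 1) * (ρ:ℝ) ^ (n + 1) := by
          rw [hC', pow_succ]
          have hn1 : (1:ℝ) ≤ (↑(n+1) + 1 : ℝ) := by
            push_cast; linarith [Nat.cast_nonneg (α := ℝ) n]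
          have hCpos : (0:ℝ) < C := lt_of_lt_of_le one_pos hC1
          have e1 : C * (1 + ‖F‖ / ↑ρ) * (↑(n + 1) + 1) * ((ρ:ℝ) ^ n * ↑ρ)
              = (C * (ρ:ℝ)^n * ↑ρ + C * (ρ:ℝ)^n * ‖F‖) * (↑(n+1) + 1) := by
            field_simp
          rw [e1]
          have hX : (0:ℝ) ≤ C * (ρ:ℝ)^n * ↑ρ + C * (ρ:ℝ)^n * ‖F‖ := by positivity
          nlinarith [mul_le_mul_of_nonneg_left hn1 hX]

lemma sr_sum_le (T F : H →L[ℂ] H) (α : ℂ) (hFT : F * T = 0) (hFF : F * F = α • F)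
    (ρ : ℝ≥0) (hρT : spectralRadius ℂ T < ρ) (hαρ : ‖α‖ ≤ (ρ : ℝ)) (hρpos : (0:ℝ) < ρ) :
    spectralRadius ℂ (T + F) ≤ ρ := by
  set A : H →L[ℂ] H := T + F with hA
  obtain ⟨C, hC1, hCb⟩ := pow_norm_le_of_sr_lt T ρ hρT
  have hCpos : (0:ℝ) < C := lt_of_lt_of_le one_pos hC1
  have hdecomp : ∀ n : ℕ, ∃ S : H →L[ℂ] H,
      A ^ n = T ^ n + S * F ∧ ‖S‖ ≤ C * n * (ρ:ℝ) ^ n / (ρ:ℝ) := by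
    intro n
    induction n with
    | zero =>
      refine ⟨0, by rw [pow_zero, pow_zero, zero_mul, add_zero], by norm_num⟩
    | succ n ih =>
      obtain ⟨S, hSeq, hSb⟩ := ih
      refine ⟨T ^ n + α • S, ?_, ?_⟩
      · calc A ^ (n + 1) = (T ^ n + S * F) * (T + F) := by rw [pow_succ, hSeq, ← hA]
          _ = T ^ n * T + T ^ n * F + (S * F * T + S * F * F) := by
              rw [add_mul, mul_add, mul_add]
          _ = T ^ (n + 1) + (T ^ n + α • S) * F := by
              rw [mul_assoc, hFT, mul_zero, mul_assoc, hFF, ← pow_succ]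
              rw [add_mul, smul_mul_assoc, mul_smul_comm]
              rw [zero_add, add_assoc]
      · have h1 : ‖T ^ n + α • S‖ ≤ ‖T ^ n‖ + ‖α‖ * ‖S‖ := by
          refine (norm_add_le _ _).trans ?_
          gcongr
          rw [norm_smul]
        have h2 := hCb n
        have hSnn : (0:ℝ) ≤ ‖S‖ := norm_nonneg _
        have hαnn : (0:ℝ) ≤ ‖α‖ := norm_nonneg _
        have hpn : (0:ℝ) ≤ (ρ:ℝ)^n := by positivity
        have key : ‖α‖ * ‖S‖ ≤ (ρ:ℝ) * (C * n * (ρ:ℝ) ^ n / (ρ:ℝ)) :=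
          mul_le_mul hαρ hSb hSnn hρpos.le
        have e2 : (ρ:ℝ) * (C * n * (ρ:ℝ) ^ n / (ρ:ℝ)) = C * n * (ρ:ℝ)^n := by
          field_simp
        rw [e2] at key
        have goal_eq : C * ↑(n+1) * (ρ:ℝ) ^ (n+1) / (ρ:ℝ) = C * (ρ:ℝ)^n + C * n * (ρ:ℝ)^n := by
          rw [pow_succ]
          field_simp
          push_cast
          ring
        rw [goal_eq]
        linarith
  set C' : ℝ := C * (1 + ‖F‖ / (ρ : ℝ)) with hC'
  have hC'pos : 0 < C' := by positivity
  apply sr_le_aux A ρ C' hC'pos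
  intro n
  obtain ⟨S, hSeq, hSb⟩ := hdecomp n
  have h1 : ‖A ^ n‖ ≤ ‖T ^ n‖ + ‖S‖ * ‖F‖ := by
    rw [hSeq]
    exact (norm_add_le _ _).trans (by gcongr; exact norm_mul_le _ _)
  have h2 := hCb n
  have hFn : (0:ℝ) ≤ ‖F‖ := norm_nonneg _
  have hpn : (0:ℝ) ≤ (ρ:ℝ)^n := by positivity
  have hSF : ‖S‖ * ‖F‖ ≤ C * n * (ρ:ℝ)^n / (ρ:ℝ) * ‖F‖ :=
    mul_le_mul_of_nonneg_right hSb hFn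
  have hnn : (0:ℝ) ≤ (n:ℝ) := Nat.cast_nonneg n
  calc ‖A ^ n‖ ≤ C * (ρ:ℝ)^n + C * n * (ρ:ℝ)^n / (ρ:ℝ) * ‖F‖ := by linarith
    _ ≤ C' * (↑n + 1) * (ρ:ℝ) ^ n := by
        rw [hC']
        have e3 : C * (1 + ‖F‖ / ↑ρ) * (↑n + 1) * (ρ:ℝ)^n
            = (C * (ρ:ℝ)^n + C * (ρ:ℝ)^n * (‖F‖ / ↑ρ)) * (↑n + 1) := by ring
        have e4 : C * (n:ℝ) * (ρ:ℝ)^n / (ρ:ℝ) * ‖F‖ = (C * (ρ:ℝ)^n * (‖F‖ / ↑ρ)) * n := by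
          field_simp
        rw [e3, e4]
        have hXnn : (0:ℝ) ≤ C * (ρ:ℝ)^n := by positivity
        have hYnn : (0:ℝ) ≤ C * (ρ:ℝ)^n * (‖F‖ / ↑ρ) := by positivity
        nlinarith [mul_nonneg hXnn hnn, mul_nonneg hYnn hnn]

end PowLemmas



/-- The rank one operator `f ⊗ g` given by `(f ⊗ g) h = ⟨h, g⟩ f`, where the inner
product is linear in the first argument (i.e. `⟪g, h⟫_ℂ • f` in Mathlib's convention). -/
noncomputable def rankOne {H : Type*} [NormedAddCommGroup H] [InnerProductSpace ℂ H]
    (f g : H) : H →L[ℂ] H := (innerSL ℂ g).smulRight f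

/-- The left spectrum of a bounded operator. -/
def leftSpectrum {H : Type*} [NormedAddCommGroup H] [InnerProductSpace ℂ H]
    (T : H →L[ℂ] H) : Set ℂ :=
  {l : ℂ | ¬ ∃ L : H →L[ℂ] H, L ∘L (T - l • (1 : H →L[ℂ] H)) = 1}

/-- The point spectrum (set of eigenvalues) of a bounded operator. -/
def pointSpectrum {H : Type*} [NormedAddCommGroup H] [InnerProductSpace ℂ H]
    (T : H →L[ℂ] H) : Set ℂ :=
  {l : ℂ | ∃ h : H, h ≠ 0 ∧ T h = l • h}

theorem left_spectrum_rankOne_perturbation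
    {H : Type*} [NormedAddCommGroup H] [InnerProductSpace ℂ H] [CompleteSpace H]
    [Nontrivial H] (T : H →L[ℂ] H)
    (hcyc : ∃ ξ : H, Dense (Submodule.span ℂ (Set.range fun n : ℕ => (T ^ n) ξ) : Set H))
    (hana : (⋂ n : ℕ, Set.range ⇑(T ^ n)) = {0})
    (hlinv : ∃ L : H →L[ℂ] H, L ∘L T = 1)
    (f g : H) (hg : g ∈ LinearMap.ker (ContinuousLinearMap.adjoint T : H →ₗ[ℂ] H)) :
    leftSpectrum T ⊆ leftSpectrum (T + rankOne f g) ∧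
    leftSpectrum (T + rankOne f g) \ {⟪g, f⟫_ℂ} = leftSpectrum T \ {⟪g, f⟫_ℂ} ∧
    spectralRadius ℂ (T + rankOne f g) =
      max (spectralRadius ℂ T) (‖⟪g, f⟫_ℂ‖₊ : ENNReal) := by
  classical
  set F : H →L[ℂ] H := rankOne f g with hF
  set A : H →L[ℂ] H := T + F with hA
  set α : ℂ := ⟪g, f⟫_ℂ with hα
  have hFapp : ∀ x, F x = ⟪g, x⟫_ℂ • f := fun x => rfl
  have hTg : ∀ x, ⟪g, T x⟫_ℂ = 0 := by
    intro x
    rw [← ContinuousLinearMap.adjoint_inner_left, show ContinuousLinearMap.adjoint T g = 0 from LinearMap.mem_ker.mp hg, inner_zero_left]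
  have hgF : ∀ x, ⟪g, F x⟫_ℂ = α * ⟪g, x⟫_ℂ := by
    intro x
    rw [hFapp, inner_smul_right, mul_comm]
  have hgA : ∀ x, ⟪g, A x⟫_ℂ = α * ⟪g, x⟫_ℂ := by
    intro x
    rw [hA]
    simp only [ContinuousLinearMap.add_apply, inner_add_right, hTg, hgF, zero_add]
  -- ⟪g, (T - l) x⟫ = -l ⟪g,x⟫ ;  ⟪g, (A - l) x⟫ = (α - l) ⟪g,x⟫
  have hTl : ∀ (l : ℂ) (x : H), ⟪g, (T - l • (1 : H →L[ℂ] H)) x⟫_ℂ = -l * ⟪g, x⟫_ℂ := by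
    intro l x
    simp only [ContinuousLinearMap.sub_apply, ContinuousLinearMap.smul_apply,
      ContinuousLinearMap.one_apply, inner_sub_right, hTg, inner_smul_right]
    ring
  have hAl : ∀ (l : ℂ) (x : H), ⟪g, (A - l • (1 : H →L[ℂ] H)) x⟫_ℂ = (α - l) * ⟪g, x⟫_ℂ := by
    intro l x
    simp only [ContinuousLinearMap.sub_apply, ContinuousLinearMap.smul_apply,
      ContinuousLinearMap.one_apply, inner_sub_right, hgA, inner_smul_right]
    ring
  have hATl : ∀ (l : ℂ) (x : H),
      (A - l • (1 : H →L[ℂ] H)) x = (T - l • (1 : H →L[ℂ] H)) x + F x := by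
    intro l x
    simp only [hA, ContinuousLinearMap.sub_apply, ContinuousLinearMap.add_apply]
    abel
  have hFnorm : ∀ x, ‖F x‖ ≤ ‖⟪g, x⟫_ℂ‖ * ‖f‖ := by
    intro x; rw [hFapp, norm_smul]
  -- key directions
  have key1 : ∀ l : ℂ, l ∉ leftSpectrum A → l ∉ leftSpectrum T := by
    intro l hl
    simp only [leftSpectrum, Set.mem_setOf_eq, not_not] at hl ⊢
    by_cases hl0 : l = 0
    · subst hl0
      obtain ⟨L, hL⟩ := hlinv
      exact ⟨L, by simpa using hL⟩
    · obtain ⟨L, hL⟩ := hl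
      apply exists_left_inverse_of_bound _ (‖L‖ * (1 + ‖g‖ * ‖f‖ / ‖l‖))
      intro x
      have hbase : ‖x‖ ≤ ‖L‖ * ‖(A - l • (1 : H →L[ℂ] H)) x‖ := by
        have : L ((A - l • (1 : H →L[ℂ] H)) x) = x := by
          rw [← ContinuousLinearMap.comp_apply, hL, ContinuousLinearMap.one_apply]
        calc ‖x‖ = ‖L ((A - l • (1 : H →L[ℂ] H)) x)‖ := by rw [this]
          _ ≤ ‖L‖ * ‖(A - l • (1 : H →L[ℂ] H)) x‖ := L.le_opNorm _
      set t := ‖(T - l • (1 : H →L[ℂ] H)) x‖ with ht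
      set c := ‖⟪g, x⟫_ℂ‖ with hc
      have htn : 0 ≤ t := norm_nonneg _
      have hcn : 0 ≤ c := norm_nonneg _
      have hlpos : (0:ℝ) < ‖l‖ := norm_pos_iff.mpr hl0
      have hbd1 : ‖l‖ * c ≤ ‖g‖ * t := by
        have h1 : ‖⟪g, (T - l • (1 : H →L[ℂ] H)) x⟫_ℂ‖ ≤ ‖g‖ * t :=
          norm_inner_le_norm _ _
        rw [hTl l x] at h1
        rw [norm_mul, norm_neg] at h1
        exact h1
      have hbd2 : ‖(A - l • (1 : H →L[ℂ] H)) x‖ ≤ t + c * ‖f‖ := by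
        rw [hATl l x]
        exact (norm_add_le _ _).trans (by gcongr; exact hFnorm x)
      have hLn : (0:ℝ) ≤ ‖L‖ := norm_nonneg _
      have hfn : (0:ℝ) ≤ ‖f‖ := norm_nonneg _
      have hgn : (0:ℝ) ≤ ‖g‖ := norm_nonneg _
      have hcle : c ≤ ‖g‖ * t / ‖l‖ := by
        rw [le_div_iff₀ hlpos]; nlinarith
      calc ‖x‖ ≤ ‖L‖ * ‖(A - l • (1 : H →L[ℂ] H)) x‖ := hbase
        _ ≤ ‖L‖ * (t + c * ‖f‖) := by gcongr
        _ ≤ ‖L‖ * (t + (‖g‖ * t / ‖l‖) * ‖f‖) := by gcongr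
        _ = ‖L‖ * (1 + ‖g‖ * ‖f‖ / ‖l‖) * t := by field_simp
  have key2 : ∀ l : ℂ, l ≠ α → l ∉ leftSpectrum T → l ∉ leftSpectrum A := by
    intro l hlα hl
    simp only [leftSpectrum, Set.mem_setOf_eq, not_not] at hl ⊢
    obtain ⟨L, hL⟩ := hl
    apply exists_left_inverse_of_bound _ (‖L‖ * (1 + ‖g‖ * ‖f‖ / ‖α - l‖))
    intro x
    have hbase : ‖x‖ ≤ ‖L‖ * ‖(T - l • (1 : H →L[ℂ] H)) x‖ := by
      have : L ((T - l • (1 : H →L[ℂ] H)) x) = x := by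
        rw [← ContinuousLinearMap.comp_apply, hL, ContinuousLinearMap.one_apply]
      calc ‖x‖ = ‖L ((T - l • (1 : H →L[ℂ] H)) x)‖ := by rw [this]
        _ ≤ ‖L‖ * ‖(T - l • (1 : H →L[ℂ] H)) x‖ := L.le_opNorm _
    set t := ‖(A - l • (1 : H →L[ℂ] H)) x‖ with ht
    set c := ‖⟪g, x⟫_ℂ‖ with hc
    have htn : 0 ≤ t := norm_nonneg _
    have hcn : 0 ≤ c := norm_nonneg _
    have hlpos : (0:ℝ) < ‖α - l‖ := by
      rw [norm_pos_iff, sub_ne_zero]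
      exact fun h => hlα h.symm
    have hbd1 : ‖α - l‖ * c ≤ ‖g‖ * t := by
      have h1 : ‖⟪g, (A - l • (1 : H →L[ℂ] H)) x⟫_ℂ‖ ≤ ‖g‖ * t := norm_inner_le_norm _ _
      rw [hAl l x, norm_mul] at h1
      exact h1
    have hbd2 : ‖(T - l • (1 : H →L[ℂ] H)) x‖ ≤ t + c * ‖f‖ := by
      have : (T - l • (1 : H →L[ℂ] H)) x = (A - l • (1 : H →L[ℂ] H)) x - F x := by
        rw [hATl l x]; abel
      rw [this]
      exact (norm_sub_le _ _).trans (by gcongr; exact hFnorm x)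
    have hLn : (0:ℝ) ≤ ‖L‖ := norm_nonneg _
    have hfn : (0:ℝ) ≤ ‖f‖ := norm_nonneg _
    have hgn : (0:ℝ) ≤ ‖g‖ := norm_nonneg _
    have hcle : c ≤ ‖g‖ * t / ‖α - l‖ := by
      rw [le_div_iff₀ hlpos]; nlinarith
    calc ‖x‖ ≤ ‖L‖ * ‖(T - l • (1 : H →L[ℂ] H)) x‖ := hbase
      _ ≤ ‖L‖ * (t + c * ‖f‖) := by gcongr
      _ ≤ ‖L‖ * (t + (‖g‖ * t / ‖α - l‖) * ‖f‖) := by gcongr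
      _ = ‖L‖ * (1 + ‖g‖ * ‖f‖ / ‖α - l‖) * t := by field_simp
  have part1 : leftSpectrum T ⊆ leftSpectrum A := by
    intro l hl
    by_contra hcon
    exact (key1 l hcon) hl
  have part2 : leftSpectrum A \ {α} = leftSpectrum T \ {α} := by
    ext l
    simp only [Set.mem_diff, Set.mem_singleton_iff]
    constructor
    · rintro ⟨hl, hlα⟩
      refine ⟨?_, hlα⟩
      by_contra hcon
      exact (key2 l hlα hcon) hl
    · rintro ⟨hl, hlα⟩
      exact ⟨part1 hl, hlα⟩
  -- ring identities
  have hFT : F * T = 0 := by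
    ext x
    simp only [ContinuousLinearMap.mul_apply, ContinuousLinearMap.zero_apply, hFapp, hTg,
      zero_smul]
  have hFF : F * F = α • F := by
    ext x
    simp only [ContinuousLinearMap.mul_apply, ContinuousLinearMap.smul_apply, hFapp,
      inner_smul_right, smul_smul]
    rw [mul_comm]
  have hTAF : T = A - F := by rw [hA, add_sub_cancel_right]
  -- spectral radius bounds
  have hαle : (‖α‖₊ : ℝ≥0∞) ≤ spectralRadius ℂ A := by
    by_cases hg0 : g = 0
    · have : α = 0 := by rw [hα, hg0, inner_zero_left]
      simp [this]
    · have hmem : α ∈ spectrum ℂ A := mem_spectrum_of_left_eig A g α hg0 hgA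
      exact le_iSup₂ (f := fun k (_ : k ∈ spectrum ℂ A) => (‖k‖₊ : ℝ≥0∞)) α hmem
  have hrAle : ∀ ρ : ℝ≥0, max (spectralRadius ℂ T) (‖α‖₊ : ℝ≥0∞) < ρ →
      spectralRadius ℂ A ≤ ρ := by
    intro ρ hρ
    rw [max_lt_iff] at hρ
    obtain ⟨hρT, hρα⟩ := hρ
    have hαρ : ‖α‖ ≤ (ρ : ℝ) := by
      have := ENNReal.coe_lt_coe.mp hρα
      exact_mod_cast this.le
    have hρpos0 : (0:ℝ≥0) < ρ := by exact_mod_cast lt_of_le_of_lt zero_le hρα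
    exact sr_sum_le T F α hFT hFF ρ hρT hαρ hρpos0
  -- conclude part 3
  have hrTA : spectralRadius ℂ T ≤ spectralRadius ℂ A := by
    by_contra hcon
    push_neg at hcon
    obtain ⟨ρ, h1, h2⟩ := ENNReal.lt_iff_exists_nnreal_btwn.mp hcon
    exact absurd (lt_of_le_of_lt (sr_left_le T F hFT ρ h1) h2) (lt_irrefl _)
  have part3 : spectralRadius ℂ A = max (spectralRadius ℂ T) (‖α‖₊ : ℝ≥0∞) := by
    apply le_antisymm
    · by_contra hcon
      push_neg at hcon
      obtain ⟨ρ, h1, h2⟩ := ENNReal.lt_iff_exists_nnreal_btwn.mp hcon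
      exact absurd (lt_of_le_of_lt (hrAle ρ h1) h2) (lt_irrefl _)
    · exact max_le hrTA hαle
  exact ⟨part1, part2, part3⟩
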